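/- Let τ, Δ, γ be rational numbers satisfying the two equations 10τ³ + 15Δτ + γ = 0 and 5τ⁴ + 15Δτ² + 2γτ + 3Δ² = 0. Then τ = 0, Δ = 0 and γ = 0. -/
import Mathlib

lemma no_rat_sqrt_five (q : ℚ) : q ^ 2 ≠ 5 := by
  intro h
  have h5 : Irrational (Real.sqrt (5:ℕ)) := Nat.Prime.irrational_sqrt (by norm_num)
  apply h5
  refine ⟨|q|, ?_⟩
  have hq : ((q : ℝ)) ^ 2 = 5 := by exact_mod_cast h
  rw [show ((5:ℕ):ℝ) = (q:ℝ)^2 by rw [hq]; norm_num, Real.sqrt_sq_eq_abs]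
  push_cast
  rfl

/-- Arithmetic lemma from the proof of Theorem 2.6, case Y ≅ ℙ⁴:
if rationals τ, Δ, γ satisfy 10τ³ + 15Δτ + γ = 0 and
5τ⁴ + 15Δτ² + 2γτ + 3Δ² = 0, then τ = Δ = γ = 0. -/
theorem stmt_0 (τ Δ γ : ℚ)
    (h1 : 10 * τ ^ 3 + 15 * Δ * τ + γ = 0)
    (h2 : 5 * τ ^ 4 + 15 * Δ * τ ^ 2 + 2 * γ * τ + 3 * Δ ^ 2 = 0) :
    τ = 0 ∧ Δ = 0 ∧ γ = 0 := by
  have key : Δ ^ 2 - 5 * Δ * τ ^ 2 - 5 * τ ^ 4 = 0 := by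
    linear_combination (1/3) * h2 - (2/3) * τ * h1
  by_cases hτ : τ = 0
  · subst hτ
    have hΔ : Δ = 0 := by nlinarith [sq_nonneg Δ]
    refine ⟨rfl, hΔ, ?_⟩; linarith [h1]
  · exfalso
    apply no_rat_sqrt_five ((2 * Δ - 5 * τ ^ 2) / (3 * τ ^ 2))
    have hτ2 : τ ^ 2 ≠ 0 := pow_ne_zero _ hτ
    field_simp
    ring_nf
    nlinarith [key, sq_nonneg τ]
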